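/- Let A be a real symmetric (2n−1)×(2n−1) matrix, s ≥ 2, and let B be the (s−1)×(s−1) matrix all of whose entries equal 1. Define C as the block diagonal matrix diag(A, B), and D as the matrix with diagonal blocks A − I_{2n−1}, the 1×1 block (−1), and B, with off-diagonal couplings: the row of the 1×1 block has entries 1 against the B-block and 0 against the A-block, and the column of the 1×1 block has entries −1 against the B-block and 0 against the A-block. Then the characteristic polynomials satisfy p_C(λ) = p_A(λ)·(−1)^{s−1} λ^{s−2}(λ − s + 1) and p_D(λ) = p_A(λ+1)·(−1)^s λ^{s−1}(λ − (s−2)). In particular, the eigenvalues of C (with multiplicities) determine the eigenvalues of D (with multiplicities) and conversely. -/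

import Mathlib

open Matrix

lemma myVecMulVec_smul_left {ι κ : Type*} (c : ℝ) (u : ι → ℝ) (v : κ → ℝ) :
    vecMulVec (c • u) v = c • vecMulVec u v := by
  ext i j; simp [vecMulVec, mul_assoc]

lemma myFromBlocks_sub {l m : Type*} (A A' : Matrix l l ℝ) (B B' : Matrix l m ℝ)
    (C C' : Matrix m l ℝ) (D D' : Matrix m m ℝ) :
    fromBlocks A B C D - fromBlocks A' B' C' D'
      = fromBlocks (A - A') (B - B') (C - C') (D - D') := by
  ext i j
  rcases i with i | i <;> rcases j with j | j <;> simp [fromBlocks]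

lemma det_vecMulVec_sub_smul_one {ι : Type} [Fintype ι] [DecidableEq ι] [Nonempty ι]
    (u v : ι → ℝ) (lam : ℝ) :
    (vecMulVec u v - lam • 1).det
      = (-1) ^ (Fintype.card ι) * lam ^ (Fintype.card ι - 1) * (lam - v ⬝ᵥ u) := by
  have hm1 : 1 ≤ Fintype.card ι := Fintype.card_pos
  rcases eq_or_ne lam 0 with rfl | hlam
  · simp only [zero_smul, sub_zero]
    rcases eq_or_lt_of_le hm1 with h1 | h2
    · obtain ⟨hu⟩ := Fintype.card_eq_one_iff_nonempty_unique.mp h1.symm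
      rw [det_unique, ← h1]
      simp [vecMulVec, dotProduct, Finset.univ_unique]
      ring
    · have hz : (vecMulVec u v).det = 0 := by
        have h : vecMulVec u v
            = of fun i j => u i * (of (fun _ j => v j) : Matrix ι ι ℝ) i j := rfl
        rw [h, det_mul_column]
        obtain ⟨i, j, hij⟩ := Fintype.exists_pair_of_one_lt_card h2 
        have h0 : (of (fun _ j => v j) : Matrix ι ι ℝ).det = 0 :=
          det_zero_of_row_eq hij rfl
        rw [h0, mul_zero]
      rw [hz, zero_pow (by omega), mul_zero, zero_mul]
  · have key : vecMulVec u v - lam • 1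
        = (-lam) • (1 + replicateCol (Fin 1) ((-lam⁻¹) • u) * replicateRow (Fin 1) v) := by
      erw [← vecMulVec_eq (Fin 1), myVecMulVec_smul_left]
      ext i j
      by_cases h : i = j <;>
        simp [h, vecMulVec, Matrix.one_apply, Matrix.smul_apply, Matrix.add_apply] <;>
        field_simp <;> ring
    rw [key, det_smul]
    erw [det_one_add_replicateCol_mul_replicateRow (ι := Fin 1)]
    rw [ dotProduct_smul]
    have hpow : lam ^ Fintype.card ι = lam ^ (Fintype.card ι - 1) * lam := by
      rw [← pow_succ, Nat.sub_add_cancel hm1]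
    rw [show (-lam) = (-1) * lam by ring, mul_pow, hpow]
    field_simp
    linear_combination (-(v ⬝ᵥ u)) * mul_inv_cancel₀ hlam

theorem charpoly_block_matrices
    (n s : ℕ) (hn : 1 ≤ n) (hs : 2 ≤ s)
    (A : Matrix (Fin (2 * n - 1)) (Fin (2 * n - 1)) ℝ) (hA : A.IsSymm) :
    ∀ lam : ℝ,
      ((Matrix.fromBlocks A 0 0 (Matrix.of fun _ _ => (1 : ℝ)) :
          Matrix (Fin (2 * n - 1) ⊕ Fin (s - 1)) (Fin (2 * n - 1) ⊕ Fin (s - 1)) ℝ)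
          - lam • 1).det
        = (A - lam • 1).det * (-1) ^ (s - 1) * lam ^ (s - 2) * (lam - (s : ℝ) + 1) ∧
      ((Matrix.fromBlocks (A - 1) 0 0
          (Matrix.fromBlocks (-1 : Matrix (Fin 1) (Fin 1) ℝ)
            (Matrix.of fun _ _ => (1 : ℝ)) (Matrix.of fun _ _ => (-1 : ℝ))
            (Matrix.of fun _ _ => (1 : ℝ))) :
          Matrix (Fin (2 * n - 1) ⊕ (Fin 1 ⊕ Fin (s - 1)))
                 (Fin (2 * n - 1) ⊕ (Fin 1 ⊕ Fin (s - 1))) ℝ)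
          - lam • 1).det
        = (A - (lam + 1) • 1).det * (-1) ^ s * lam ^ (s - 1)
            * (lam - ((s : ℝ) - 2)) := by
  intro lam
  haveI : Nonempty (Fin (s - 1)) := ⟨⟨0, by omega⟩⟩
  constructor
  · have h1 : ((fromBlocks A 0 0 (Matrix.of fun _ _ => (1 : ℝ)) :
        Matrix (Fin (2 * n - 1) ⊕ Fin (s - 1)) (Fin (2 * n - 1) ⊕ Fin (s - 1)) ℝ)
        - lam • 1)
        = fromBlocks (A - lam • 1) 0 0 ((Matrix.of fun _ _ => (1 : ℝ)) - lam • 1) := by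
      rw [← fromBlocks_one (l := Fin (2 * n - 1)) (m := Fin (s - 1)), fromBlocks_smul,
        myFromBlocks_sub]
      simp
    rw [h1, det_fromBlocks_zero₂₁]
    have hB : (Matrix.of fun _ _ => (1 : ℝ) : Matrix (Fin (s - 1)) (Fin (s - 1)) ℝ)
        = vecMulVec (fun _ => 1) (fun _ => 1) := by
      ext i j; simp [vecMulVec]
    rw [hB, det_vecMulVec_sub_smul_one]
    have hdot : ((fun _ : Fin (s - 1) => (1 : ℝ)) ⬝ᵥ fun _ => (1 : ℝ))
        = ((s : ℝ) - 1) := by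
      simp [dotProduct, Fintype.card_fin]
      push_cast [Nat.cast_sub (by omega : 1 ≤ s)]
      ring
    rw [hdot, Fintype.card_fin]
    have : s - 1 - 1 = s - 2 := by omega
    rw [this]
    ring
  · have h1 : ((fromBlocks (A - 1) 0 0
        (fromBlocks (-1 : Matrix (Fin 1) (Fin 1) ℝ)
          (Matrix.of fun _ _ => (1 : ℝ)) (Matrix.of fun _ _ => (-1 : ℝ))
          (Matrix.of fun _ _ => (1 : ℝ))) :
        Matrix (Fin (2 * n - 1) ⊕ (Fin 1 ⊕ Fin (s - 1)))
               (Fin (2 * n - 1) ⊕ (Fin 1 ⊕ Fin (s - 1))) ℝ)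
        - lam • 1)
        = fromBlocks (A - 1 - lam • 1) 0 0
            ((fromBlocks (-1 : Matrix (Fin 1) (Fin 1) ℝ)
              (Matrix.of fun _ _ => (1 : ℝ)) (Matrix.of fun _ _ => (-1 : ℝ))
              (Matrix.of fun _ _ => (1 : ℝ))) - lam • 1) := by
      rw [← fromBlocks_one (l := Fin (2 * n - 1)) (m := Fin 1 ⊕ Fin (s - 1)), fromBlocks_smul,
        myFromBlocks_sub]
      simp
    rw [h1, det_fromBlocks_zero₂₁]
    have hA1 : A - 1 - lam • 1 = A - (lam + 1) • 1 := by
      rw [add_smul, one_smul]; abel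
    rw [hA1]
    have hB : (fromBlocks (-1 : Matrix (Fin 1) (Fin 1) ℝ)
          (Matrix.of fun _ _ => (1 : ℝ)) (Matrix.of fun _ _ => (-1 : ℝ))
          (Matrix.of fun _ _ => (1 : ℝ)) :
        Matrix (Fin 1 ⊕ Fin (s - 1)) (Fin 1 ⊕ Fin (s - 1)) ℝ)
        = vecMulVec (fun _ => 1) (Sum.elim (fun _ => -1) (fun _ => 1)) := by
      ext i j
      rcases i with i | i <;> rcases j with j | j <;>
        simp [fromBlocks, vecMulVec, Matrix.one_apply, Fin.fin_one_eq_zero]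
    rw [hB, det_vecMulVec_sub_smul_one]
    have hcard : Fintype.card (Fin 1 ⊕ Fin (s - 1)) = s := by
      simp [Fintype.card_sum, Fintype.card_fin]; omega
    have hdot : ((Sum.elim (fun _ => (-1 : ℝ)) (fun _ => 1) : Fin 1 ⊕ Fin (s - 1) → ℝ)
          ⬝ᵥ fun _ => (1 : ℝ))
        = ((s : ℝ) - 2) := by
      simp [dotProduct, Fintype.sum_sum_type]
      push_cast [Nat.cast_sub (by omega : 1 ≤ s)]
      ring
    rw [hcard, hdot]
    ring
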